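/- Let a : I × M → ℝ on finite nonempty sets I, M define a zero-sum game with bilinear payoff u(π,τ) = Σᵢ Σₘ a(i,m)π(i)τ(m). Suppose (π*, U*) is optimal for the linear program: maximize U subject to Σᵢ a(i,m)π(i) ≥ U for all m ∈ M, Σᵢ π(i) = 1, π(i) ≥ 0; and (τ*, V*) is optimal for: minimize V subject to Σₘ a(i,m)τ(m) ≤ V for all i ∈ I, Σₘ τ(m) = 1, τ(m) ≥ 0. If U* = V*, then (π*, τ*) is a Nash equilibrium of the zero-sum game. -/
import Mathlib


open Finset

/-- A mixed strategy on a finite set: a probability mass function. -/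
def IsMixed {S : Type*} [Fintype S] (p : S → ℝ) : Prop :=
  (∀ s, 0 ≤ p s) ∧ ∑ s, p s = 1

/-- Bilinear extension of payoff matrix `a`. -/
noncomputable def zsPay {I M : Type*} [Fintype I] [Fintype M]
    (a : I × M → ℝ) (π : I → ℝ) (τ : M → ℝ) : ℝ :=
  ∑ i, ∑ m, a (i, m) * π i * τ m

theorem stmt_8 {I M : Type*} [Fintype I] [Fintype M] [Nonempty I] [Nonempty M]
    (a : I × M → ℝ) (πs : I → ℝ) (τs : M → ℝ) (Us Vs : ℝ)
    -- (πs, Us) is feasible for the max LP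
    (hπfeas : IsMixed πs) (hUfeas : ∀ m, Us ≤ ∑ i, a (i, m) * πs i)
    -- and optimal: any feasible (π, U) has U ≤ Us
    (hUopt : ∀ (π : I → ℝ) (U : ℝ), IsMixed π →
      (∀ m, U ≤ ∑ i, a (i, m) * π i) → U ≤ Us)
    -- (τs, Vs) is feasible for the min LP
    (hτfeas : IsMixed τs) (hVfeas : ∀ i, ∑ m, a (i, m) * τs m ≤ Vs)
    -- and optimal: any feasible (τ, V) has Vs ≤ V
    (hVopt : ∀ (τ : M → ℝ) (V : ℝ), IsMixed τ →
      (∀ i, ∑ m, a (i, m) * τ m ≤ V) → Vs ≤ V)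
    (hUV : Us = Vs) :
    -- then (πs, τs) is a Nash equilibrium of the zero-sum game
    (∀ π, IsMixed π → zsPay a π τs ≤ zsPay a πs τs) ∧
    (∀ τ, IsMixed τ → zsPay a πs τs ≤ zsPay a πs τ) := by

  -- upper bound: for any mixed π, zsPay a π τs ≤ Vs
  have hup : ∀ π : I → ℝ, IsMixed π → zsPay a π τs ≤ Vs := by
    intro π hπ
    have : zsPay a π τs = ∑ i, π i * (∑ m, a (i, m) * τs m) := by
      unfold zsPay
      refine Finset.sum_congr rfl fun i _ => ?_
      rw [Finset.mul_sum]
      exact Finset.sum_congr rfl fun m _ => by ring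
    rw [this]
    calc ∑ i, π i * (∑ m, a (i, m) * τs m) ≤ ∑ i, π i * Vs := by
          refine Finset.sum_le_sum fun i _ => ?_
          exact mul_le_mul_of_nonneg_left (hVfeas i) (hπ.1 i)
      _ = Vs := by rw [← Finset.sum_mul, hπ.2, one_mul]
  -- lower bound: for any mixed τ, Us ≤ zsPay a πs τ
  have hlo : ∀ τ : M → ℝ, IsMixed τ → Us ≤ zsPay a πs τ := by
    intro τ hτ
    have : zsPay a πs τ = ∑ m, (∑ i, a (i, m) * πs i) * τ m := by
      unfold zsPay
      rw [Finset.sum_comm]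
      refine Finset.sum_congr rfl fun m _ => ?_
      rw [Finset.sum_mul]
    rw [this]
    calc Us = ∑ m, Us * τ m := by rw [← Finset.mul_sum, hτ.2, mul_one]
      _ ≤ ∑ m, (∑ i, a (i, m) * πs i) * τ m := by
          refine Finset.sum_le_sum fun m _ => ?_
          exact mul_le_mul_of_nonneg_right (hUfeas m) (hτ.1 m)
  have hval : zsPay a πs τs = Vs :=
    le_antisymm (hup πs hπfeas) (hUV ▸ hlo τs hτfeas)
  constructor
  · intro π hπ; rw [hval]; exact hup π hπ
  · intro τ hτ; rw [hval, ← hUV]; exact hlo τ hτ
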